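/- For α > 0 let K^{(α)} : ℝ² → ℝ be the Gaussian kernel K^{(α)}(q, p) := (1/(π α²))·exp(−(q² + p²)/α²). Let ζ_1, …, ζ_N ∈ ℝ² be points, w_1, …, w_N positive weights, and Ĥ : ℝ² → ℂ^{2×2} a continuously differentiable map with Ĥ(z) Hermitian for every z and with bounded derivative (i.e. sup_z ‖DĤ(z)‖ < ∞). Set K_s^{(α)}(z) := K^{(α)}(z − ζ_s). Then for every α > 0 the function z ↦ (K_a^{(α)}(z)·{K_b^{(α)}, Ĥ}(z) − K_b^{(α)}(z)·{K_a^{(α)}, Ĥ}(z)) / (Σ_{c=1}^N w_c K_c^{(α)}(z)) is Bochner integrable on ℝ², and the backreaction integral Î_{ab}^{(α)} := (1/2) ∫_{ℝ²} (K_a^{(α)}(z)·{K_b^{(α)}, Ĥ}(z) − K_b^{(α)}(z)·{K_a^{(α)}, Ĥ}(z)) / (Σ_{c=1}^N w_c K_c^{(α)}(z)) dz converges to the zero matrix as α → ∞. -/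

import Mathlib

open Matrix Complex MeasureTheory Filter

attribute [local instance] Matrix.normedAddCommGroup Matrix.normedSpace

/-- Port: instance search no longer unifies the matrix topology with the one induced by the
sup norm, so the two instances found by the older library are given explicitly. -/
noncomputable instance matrixSupContinuousENorm : ContinuousENorm (Matrix (Fin 2) (Fin 2) ℂ) :=
  SeminormedAddGroup.toContinuousENorm

noncomputable instance matrixSupCLMOpNorm : Norm (ℝ × ℝ →L[ℝ] Matrix (Fin 2) (Fin 2) ℂ) :=
  ContinuousLinearMap.hasOpNorm

/-- The canonical Poisson bracket `{f, g} = ∂_q f · ∂_p g − ∂_p f · ∂_q g` of a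
scalar function `f` with a matrix-valued function `g` on phase space `ℝ²`. -/
noncomputable def pbracketM (f : ℝ × ℝ → ℝ) (g : ℝ × ℝ → Matrix (Fin 2) (Fin 2) ℂ)
    (z : ℝ × ℝ) : Matrix (Fin 2) (Fin 2) ℂ :=
  (fderiv ℝ f z ((1 : ℝ), (0 : ℝ))) • (fderiv ℝ g z ((0 : ℝ), (1 : ℝ)))
    - (fderiv ℝ f z ((0 : ℝ), (1 : ℝ))) • (fderiv ℝ g z ((1 : ℝ), (0 : ℝ)))

/-- The normalized Gaussian kernel of width `α` on phase space `ℝ²`. -/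
noncomputable def gaussKer (α : ℝ) (z : ℝ × ℝ) : ℝ :=
  (1 / (Real.pi * α ^ 2)) * Real.exp (-(z.1 ^ 2 + z.2 ^ 2) / α ^ 2)

lemma gaussKer_pos {α : ℝ} (hα : α ≠ 0) (z : ℝ × ℝ) : 0 < gaussKer α z := by
  unfold gaussKer
  have := Real.pi_pos
  positivity

lemma continuous_gaussKer_shift (α : ℝ) (ζ0 : ℝ × ℝ) :
    Continuous fun z : ℝ × ℝ => gaussKer α (z - ζ0) := by
  unfold gaussKer
  fun_prop

lemma fderiv_gaussKer_apply {α : ℝ} (hα : α ≠ 0) (ζ0 z v : ℝ × ℝ) :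
    fderiv ℝ (fun y => gaussKer α (y - ζ0)) z v
      = gaussKer α (z - ζ0) * ((-2 / α ^ 2) * ((z.1 - ζ0.1) * v.1 + (z.2 - ζ0.2) * v.2)) := by
  have h1 : HasFDerivAt (fun y : ℝ × ℝ => y.1 - ζ0.1) (ContinuousLinearMap.fst ℝ ℝ ℝ) z :=
    (hasFDerivAt_fst).sub_const _
  have h2 : HasFDerivAt (fun y : ℝ × ℝ => y.2 - ζ0.2) (ContinuousLinearMap.snd ℝ ℝ ℝ) z :=
    (hasFDerivAt_snd).sub_const _
  have hsum := (((h1.mul h1).add (h2.mul h2)).neg.const_mul ((α ^ 2)⁻¹)).exp.const_mul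
      (1 / (Real.pi * α ^ 2))
  have hfun : (fun y : ℝ × ℝ => gaussKer α (y - ζ0)) =
      (fun y : ℝ × ℝ => (1 / (Real.pi * α ^ 2)) *
        Real.exp ((α ^ 2)⁻¹ * (-((y.1 - ζ0.1) * (y.1 - ζ0.1) + (y.2 - ζ0.2) * (y.2 - ζ0.2))))) := by
    funext y
    simp only [gaussKer, Prod.fst_sub, Prod.snd_sub]
    congr 1
    ring
  rw [hfun, HasFDerivAt.fderiv (f := fun y : ℝ × ℝ => (1 / (Real.pi * α ^ 2)) *
    Real.exp ((α ^ 2)⁻¹ * (-((y.1 - ζ0.1) * (y.1 - ζ0.1) + (y.2 - ζ0.2) * (y.2 - ζ0.2))))) hsum]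
  simp only [ContinuousLinearMap.coe_smul', Pi.smul_apply, ContinuousLinearMap.add_apply,
    ContinuousLinearMap.smul_apply, ContinuousLinearMap.neg_apply,
    ContinuousLinearMap.coe_fst', ContinuousLinearMap.coe_snd', smul_eq_mul]
  simp only [Pi.mul_apply, Pi.add_apply, Pi.neg_apply]
  simp only [gaussKer, Prod.fst_sub, Prod.snd_sub]
  rw [show -((z.1 - ζ0.1) ^ 2 + (z.2 - ζ0.2) ^ 2) / α ^ 2
      = (α ^ 2)⁻¹ * (-((z.1 - ζ0.1) * (z.1 - ζ0.1) + (z.2 - ζ0.2) * (z.2 - ζ0.2))) by ring]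
  ring

lemma combo_eq {α : ℝ} (hα : α ≠ 0) (Hh : ℝ × ℝ → Matrix (Fin 2) (Fin 2) ℂ)
    (za zb z : ℝ × ℝ) :
    gaussKer α (z - za) • pbracketM (fun y => gaussKer α (y - zb)) Hh z
      - gaussKer α (z - zb) • pbracketM (fun y => gaussKer α (y - za)) Hh z
    = ((-2 / α ^ 2) * (gaussKer α (z - za) * gaussKer α (z - zb))) •
        ((za.1 - zb.1) • fderiv ℝ Hh z ((0:ℝ),(1:ℝ))
          - (za.2 - zb.2) • fderiv ℝ Hh z ((1:ℝ),(0:ℝ))) := by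
  unfold pbracketM
  rw [fderiv_gaussKer_apply hα za z, fderiv_gaussKer_apply hα za z,
    fderiv_gaussKer_apply hα zb z, fderiv_gaussKer_apply hα zb z]
  simp only [mul_one, mul_zero, add_zero, zero_add]
  match_scalars <;> ring

lemma gaussKer_eq_prod (α : ℝ) : gaussKer α =
    fun z : ℝ × ℝ => ((1 / (Real.pi * α ^ 2)) * Real.exp (-(α ^ 2)⁻¹ * z.1 ^ 2)) *
      Real.exp (-(α ^ 2)⁻¹ * z.2 ^ 2) := by
  funext z
  unfold gaussKer
  rw [mul_assoc, ← Real.exp_add]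
  congr 1
  ring

lemma integrable_gaussKer {α : ℝ} (hα : 0 < α) : Integrable (gaussKer α) := by
  rw [gaussKer_eq_prod α]
  have hb : (0:ℝ) < (α ^ 2)⁻¹ := by positivity
  have h1 := (integrable_exp_neg_mul_sq hb).const_mul (1 / (Real.pi * α ^ 2))
  have h2 := integrable_exp_neg_mul_sq hb
  rw [show (volume : Measure (ℝ × ℝ)) = (volume).prod volume from rfl]
  exact h1.mul_prod h2

lemma integral_gaussKer {α : ℝ} (hα : 0 < α) : ∫ z : ℝ × ℝ, gaussKer α z = 1 := by
  rw [gaussKer_eq_prod α]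
  have hb : (0:ℝ) < (α ^ 2)⁻¹ := by positivity
  have := MeasureTheory.integral_prod_mul (μ := (volume : Measure ℝ)) (ν := (volume : Measure ℝ))
    (f := fun x : ℝ => (1 / (Real.pi * α ^ 2)) * Real.exp (-(α ^ 2)⁻¹ * x ^ 2))
    (g := fun x : ℝ => Real.exp (-(α ^ 2)⁻¹ * x ^ 2))
  rw [show (volume : Measure (ℝ × ℝ)) = (volume).prod volume from rfl, this,
    MeasureTheory.integral_const_mul, integral_gaussian]
  have hπ : (0:ℝ) ≤ Real.pi / (α ^ 2)⁻¹ := by positivity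
  rw [mul_assoc, Real.mul_self_sqrt hπ]
  have hpi := Real.pi_pos
  field_simp

/-- For Gaussian regularization kernels, the koopmon backreaction integrals
`Î_{ab}^{(α)}` are well defined for every width `α > 0` and vanish in the
limit `α → ∞`, recovering the multi-trajectory Ehrenfest scheme. -/
theorem backreaction_integral_gaussian_vanishes_atTop
    (N : ℕ) (hN : 1 ≤ N)
    (ζ : Fin N → ℝ × ℝ)
    (w : Fin N → ℝ) (hw : ∀ c, 0 < w c)
    (Hh : ℝ × ℝ → Matrix (Fin 2) (Fin 2) ℂ)
    (hHsmooth : ContDiff ℝ 1 Hh)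
    (hHherm : ∀ z, (Hh z).IsHermitian)
    (hHbdd : ∃ C : ℝ, ∀ z : ℝ × ℝ, ‖fderiv ℝ Hh z‖ ≤ C) :
    ∀ a b : Fin N,
      (∀ α : ℝ, 0 < α → Integrable (fun z : ℝ × ℝ =>
        (∑ c, w c * gaussKer α (z - ζ c))⁻¹ •
          (gaussKer α (z - ζ a) • pbracketM (fun y => gaussKer α (y - ζ b)) Hh z
            - gaussKer α (z - ζ b) • pbracketM (fun y => gaussKer α (y - ζ a)) Hh z)))
      ∧
      Tendsto (fun α : ℝ =>
        ((1 : ℝ) / 2) • ∫ z : ℝ × ℝ,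
          (∑ c, w c * gaussKer α (z - ζ c))⁻¹ •
            (gaussKer α (z - ζ a) • pbracketM (fun y => gaussKer α (y - ζ b)) Hh z
              - gaussKer α (z - ζ b) • pbracketM (fun y => gaussKer α (y - ζ a)) Hh z))
        atTop (nhds 0) := by
  intro a b
  obtain ⟨C, hC⟩ := hHbdd
  have hC0 : 0 ≤ C := le_trans (fderiv ℝ Hh 0).opNorm_nonneg (hC 0)
  set c1 : ℝ := (ζ a).1 - (ζ b).1 with hc1
  set c2 : ℝ := (ζ a).2 - (ζ b).2 with hc2
  set C' : ℝ := (|c1| + |c2|) * C with hC'def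
  have hC'0 : 0 ≤ C' := by positivity
  set M : ℝ × ℝ → Matrix (Fin 2) (Fin 2) ℂ := fun z =>
    c1 • fderiv ℝ Hh z ((0:ℝ),(1:ℝ)) - c2 • fderiv ℝ Hh z ((1:ℝ),(0:ℝ)) with hMdef
  have hfd : ∀ (z : ℝ × ℝ) (v : ℝ × ℝ), ‖v‖ ≤ 1 → ‖fderiv ℝ Hh z v‖ ≤ C := by
    intro z v hv
    have h := (fderiv ℝ Hh z).le_opNorm v
    calc ‖fderiv ℝ Hh z v‖ ≤ ‖fderiv ℝ Hh z‖ * ‖v‖ := h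
      _ ≤ C * 1 := mul_le_mul (hC z) hv (norm_nonneg _) hC0
      _ = C := mul_one C
  have hM : ∀ z, ‖M z‖ ≤ C' := by
    intro z
    calc ‖M z‖ ≤ ‖c1 • fderiv ℝ Hh z ((0:ℝ),(1:ℝ))‖ + ‖c2 • fderiv ℝ Hh z ((1:ℝ),(0:ℝ))‖ :=
          norm_sub_le _ _
      _ = |c1| * ‖fderiv ℝ Hh z ((0:ℝ),(1:ℝ))‖ + |c2| * ‖fderiv ℝ Hh z ((1:ℝ),(0:ℝ))‖ := by
          rw [norm_smul, norm_smul, Real.norm_eq_abs, Real.norm_eq_abs]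
      _ ≤ |c1| * C + |c2| * C := by
          gcongr
          · exact hfd z _ (by simp [Prod.norm_def])
          · exact hfd z _ (by simp [Prod.norm_def])
      _ = C' := by rw [hC'def]; ring
  have hMc : Continuous M := by
    have hfc : Continuous (fderiv ℝ Hh) := hHsmooth.continuous_fderiv one_ne_zero
    exact ((hfc.clm_apply continuous_const).const_smul c1).sub
      ((hfc.clm_apply continuous_const).const_smul c2)
  -- the simplified form of the integrand
  have hfun_eq : ∀ α : ℝ, 0 < α →
      (fun z : ℝ × ℝ =>
        (∑ c, w c * gaussKer α (z - ζ c))⁻¹ •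
          (gaussKer α (z - ζ a) • pbracketM (fun y => gaussKer α (y - ζ b)) Hh z
            - gaussKer α (z - ζ b) • pbracketM (fun y => gaussKer α (y - ζ a)) Hh z))
      = fun z : ℝ × ℝ =>
          ((∑ c, w c * gaussKer α (z - ζ c))⁻¹ *
            ((-2 / α ^ 2) * (gaussKer α (z - ζ a) * gaussKer α (z - ζ b)))) • M z := by
    intro α hα
    funext z
    rw [combo_eq hα.ne' Hh (ζ a) (ζ b) z, smul_smul]
  have hSpos : ∀ (α : ℝ), 0 < α → ∀ z : ℝ × ℝ,
      0 < ∑ c, w c * gaussKer α (z - ζ c) := by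
    intro α hα z
    have : (Finset.univ : Finset (Fin N)).Nonempty := ⟨⟨0, hN⟩, Finset.mem_univ _⟩
    exact Finset.sum_pos (f := fun c => w c * gaussKer α (z - ζ c))
      (fun c _ => mul_pos (hw c) (gaussKer_pos hα.ne' _)) this
  -- pointwise norm bound for the simplified integrand
  have hbound : ∀ (α : ℝ), 0 < α → ∀ z : ℝ × ℝ,
      ‖((∑ c, w c * gaussKer α (z - ζ c))⁻¹ *
          ((-2 / α ^ 2) * (gaussKer α (z - ζ a) * gaussKer α (z - ζ b)))) • M z‖
        ≤ ((2 / α ^ 2) * (w a)⁻¹ * C') * gaussKer α (z - ζ b) := by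
    intro α hα z
    have hS : 0 < ∑ c, w c * gaussKer α (z - ζ c) := hSpos α hα z
    have hKa0 : 0 < gaussKer α (z - ζ a) := gaussKer_pos hα.ne' _
    have hKb0 : 0 < gaussKer α (z - ζ b) := gaussKer_pos hα.ne' _
    have hwa : 0 < w a := hw a
    have h1 : w a * gaussKer α (z - ζ a) ≤ ∑ c, w c * gaussKer α (z - ζ c) :=
      Finset.single_le_sum (f := fun c => w c * gaussKer α (z - ζ c))
        (fun c _ => (mul_pos (hw c) (gaussKer_pos hα.ne' _)).le) (Finset.mem_univ a)
    have h2 : (∑ c, w c * gaussKer α (z - ζ c))⁻¹ ≤ (w a * gaussKer α (z - ζ a))⁻¹ :=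
      inv_anti₀ (mul_pos hwa hKa0) h1
    have key : (∑ c, w c * gaussKer α (z - ζ c))⁻¹ *
        (gaussKer α (z - ζ a) * gaussKer α (z - ζ b))
        ≤ (w a)⁻¹ * gaussKer α (z - ζ b) := by
      have step := mul_le_mul_of_nonneg_right h2 (mul_pos hKa0 hKb0).le
      refine step.trans_eq ?_
      rw [mul_inv]
      field_simp
    have hpos2 : (0:ℝ) < (2 / α ^ 2) * ((∑ c, w c * gaussKer α (z - ζ c))⁻¹ *
        (gaussKer α (z - ζ a) * gaussKer α (z - ζ b))) :=
      mul_pos (by positivity) (mul_pos (inv_pos.2 hS) (mul_pos hKa0 hKb0))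
    have habs : |(∑ c, w c * gaussKer α (z - ζ c))⁻¹ *
        ((-2 / α ^ 2) * (gaussKer α (z - ζ a) * gaussKer α (z - ζ b)))|
        = (2 / α ^ 2) * ((∑ c, w c * gaussKer α (z - ζ c))⁻¹ *
            (gaussKer α (z - ζ a) * gaussKer α (z - ζ b))) := by
      rw [show (∑ c, w c * gaussKer α (z - ζ c))⁻¹ *
          ((-2 / α ^ 2) * (gaussKer α (z - ζ a) * gaussKer α (z - ζ b)))
          = -((2 / α ^ 2) * ((∑ c, w c * gaussKer α (z - ζ c))⁻¹ *
              (gaussKer α (z - ζ a) * gaussKer α (z - ζ b)))) by ring,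
        abs_neg, _root_.abs_of_nonneg hpos2.le]
    rw [norm_smul, Real.norm_eq_abs, habs]
    have hfin := mul_le_mul
      (mul_le_mul_of_nonneg_left key (by positivity : (0:ℝ) ≤ 2 / α ^ 2)) (hM z)
      (norm_nonneg _)
      (mul_nonneg (by positivity) (mul_nonneg (inv_nonneg.2 hwa.le) hKb0.le))
    refine hfin.trans_eq ?_
    ring
  -- continuity of the simplified integrand
  have hcont : ∀ (α : ℝ), 0 < α → Continuous (fun z : ℝ × ℝ =>
      ((∑ c, w c * gaussKer α (z - ζ c))⁻¹ *
        ((-2 / α ^ 2) * (gaussKer α (z - ζ a) * gaussKer α (z - ζ b)))) • M z) := by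
    intro α hα
    have hScont : Continuous (fun z : ℝ × ℝ => ∑ c, w c * gaussKer α (z - ζ c)) := by
      apply continuous_finset_sum
      intro c _
      exact continuous_const.mul (continuous_gaussKer_shift α (ζ c))
    have hSinv : Continuous (fun z : ℝ × ℝ => (∑ c, w c * gaussKer α (z - ζ c))⁻¹) :=
      hScont.inv₀ (fun z => (hSpos α hα z).ne')
    exact (hSinv.mul (continuous_const.mul ((continuous_gaussKer_shift α (ζ a)).mul
      (continuous_gaussKer_shift α (ζ b))))).smul hMc
  -- integrability of the dominating function
  have hgint : ∀ (α : ℝ), 0 < α →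
      Integrable (fun z : ℝ × ℝ => ((2 / α ^ 2) * (w a)⁻¹ * C') * gaussKer α (z - ζ b)) := by
    intro α hα
    exact ((integrable_gaussKer hα).comp_sub_right (ζ b)).const_mul _
  have hintF : ∀ α : ℝ, 0 < α → Integrable (fun z : ℝ × ℝ =>
      (∑ c, w c * gaussKer α (z - ζ c))⁻¹ •
        (gaussKer α (z - ζ a) • pbracketM (fun y => gaussKer α (y - ζ b)) Hh z
          - gaussKer α (z - ζ b) • pbracketM (fun y => gaussKer α (y - ζ a)) Hh z)) := by
    intro α hα
    rw [hfun_eq α hα]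
    haveI : TopologicalSpace.PseudoMetrizableSpace (Matrix (Fin 2) (Fin 2) ℂ) :=
      inferInstanceAs (TopologicalSpace.PseudoMetrizableSpace (Fin 2 → Fin 2 → ℂ))
    exact (hgint α hα).mono' ((hcont α hα).aestronglyMeasurable)
      (Filter.Eventually.of_forall (hbound α hα))
  refine ⟨hintF, ?_⟩
  -- convergence to zero
  apply squeeze_zero_norm' (a := fun α : ℝ => ((w a)⁻¹ * C') / α ^ 2)
  · filter_upwards [eventually_gt_atTop (0:ℝ)] with α hα
    have hI : ‖∫ z : ℝ × ℝ,
        (∑ c, w c * gaussKer α (z - ζ c))⁻¹ •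
          (gaussKer α (z - ζ a) • pbracketM (fun y => gaussKer α (y - ζ b)) Hh z
            - gaussKer α (z - ζ b) • pbracketM (fun y => gaussKer α (y - ζ a)) Hh z)‖
        ≤ (2 / α ^ 2) * (w a)⁻¹ * C' := by
      rw [hfun_eq α hα]
      have := norm_integral_le_of_norm_le (hgint α hα)
        (Filter.Eventually.of_forall (hbound α hα))
      refine this.trans ?_
      rw [MeasureTheory.integral_const_mul]
      rw [MeasureTheory.integral_sub_right_eq_self (gaussKer α) (ζ b), integral_gaussKer hα]
      rw [mul_one]
    rw [norm_smul, Real.norm_eq_abs]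
    calc |(1:ℝ)/2| * ‖_‖ ≤ ((1:ℝ)/2) * ((2 / α ^ 2) * (w a)⁻¹ * C') := by
          rw [_root_.abs_of_nonneg (by norm_num : (0:ℝ) ≤ 1/2)]
          gcongr
      _ = ((w a)⁻¹ * C') / α ^ 2 := by ring
  · exact Tendsto.div_atTop tendsto_const_nhds (tendsto_pow_atTop two_ne_zero)
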